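/- Let k be an algebraically closed field of characteristic 0, q ∈ k a root of unity of order at least 3, and a ∈ k a nonzero scalar. Let the 3×3 braiding matrix be q_{11} = q, q_{12} = a, q_{13} = q⁻¹a⁻², q_{21} = q⁻¹a⁻¹, q_{22} = −1, q_{23} = qa, q_{31} = qa², q_{32} = a⁻¹, q_{33} = q⁻¹ (super type A₃). Then for every ν ∈ k, the quotient of the free algebra k⟨y_1,y_2,y_3⟩ by the two-sided ideal generated by y_2², y_{13}, y_{112}, y_{332}, and [y_{(13)}, y_2]_c − ν is a nontrivial algebra. -/

import Mathlib

/-- The `q`-bilinear form `q(α,β) = ∏ i j, (q i j) ^ (α i * β j)` on `ℕⁿ`-degrees. -/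
noncomputable def qForm {k : Type*} [Field k] {n : ℕ} (q : Fin n → Fin n → k)
    (α β : Fin n → ℕ) : k :=
  ∏ i : Fin n, ∏ j : Fin n, q i j ^ (α i * β j)

/-- The braided commutator on pairs (homogeneous element, its `ℕⁿ`-degree):
`[u,v]_c = u v − q(deg u, deg v) v u`. -/
noncomputable def bc {k : Type*} [Field k] {n : ℕ} (q : Fin n → Fin n → k)
    (u v : FreeAlgebra k (Fin n) × (Fin n → ℕ)) :
    FreeAlgebra k (Fin n) × (Fin n → ℕ) :=
  (u.1 * v.1 - qForm q u.2 v.2 • (v.1 * u.1), fun i => u.2 i + v.2 i)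

/-- The generator `y i` of the free algebra, together with its degree `e_i`. -/
noncomputable def ygen (k : Type*) [Field k] {n : ℕ} (i : Fin n) :
    FreeAlgebra k (Fin n) × (Fin n → ℕ) :=
  (FreeAlgebra.ι k i, fun j => if j = i then 1 else 0)

open Matrix in
/-- The representation sending `y₁ ↦ E₄₁`, `y₂ ↦ E₁₃ + E₂₄`, `y₃ ↦ ν E₃₂`. -/
noncomputable def repY {k : Type*} [Field k] (ν : k) : Fin 3 → Matrix (Fin 4) (Fin 4) k :=
  ![single 3 0 1,
    single 0 2 1 + single 1 3 1,
    ν • single 2 1 1]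

open Matrix in
theorem sum_diag_eq_one4 {k : Type*} [Field k] :
    single (0:Fin 4) (0:Fin 4) (1:k) + single 1 1 1 + single 2 2 1
      + single 3 3 1 = 1 := by
  have h := matrix_eq_sum_single (1 : Matrix (Fin 4) (Fin 4) k)
  rw [Fin.sum_univ_four] at h
  simp only [Fin.sum_univ_four, Matrix.one_apply] at h
  rw [h]
  simp +decide [single_zero]

theorem qForm_eval3 {k : Type*} [Field k] (q : Fin 3 → Fin 3 → k) (α β : Fin 3 → ℕ) :
    qForm q α β = q 0 0 ^ (α 0 * β 0) * q 0 1 ^ (α 0 * β 1) * q 0 2 ^ (α 0 * β 2)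
      * (q 1 0 ^ (α 1 * β 0) * q 1 1 ^ (α 1 * β 1) * q 1 2 ^ (α 1 * β 2))
      * (q 2 0 ^ (α 2 * β 0) * q 2 1 ^ (α 2 * β 1) * q 2 2 ^ (α 2 * β 2)) := by
  simp [qForm, Fin.prod_univ_three]

theorem statement_13 {k : Type*} [Field k] [IsAlgClosed k] [CharZero k]
    (m : ℕ) (hm : 3 ≤ m) (q₀ : k) (hq₀ : IsPrimitiveRoot q₀ m) (a : k) (ha : a ≠ 0)
    (ν : k)
    (q : Fin 3 → Fin 3 → k) (hq : q = ![![q₀, a, q₀⁻¹ * (a ^ 2)⁻¹], ![q₀⁻¹ * a⁻¹, -1, q₀ * a], ![q₀ * a ^ 2, a⁻¹, q₀⁻¹]]) :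
    (1 : FreeAlgebra k (Fin 3)) ∉ TwoSidedIdeal.span
      ({FreeAlgebra.ι k (1 : Fin 3) ^ 2,
        (bc q (ygen k 0) (ygen k 2)).1,
        (bc q (ygen k 0) (bc q (ygen k 0) (ygen k 1))).1,
        (bc q (ygen k 2) (bc q (ygen k 2) (ygen k 1))).1,
        (bc q (bc q (ygen k 0) (bc q (ygen k 1) (ygen k 2))) (ygen k 1)).1 - algebraMap k (FreeAlgebra k (Fin 3)) ν} : Set (FreeAlgebra k (Fin 3))) := by
  have hq0 : q₀ ≠ 0 := hq₀.ne_zero (by omega)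
  intro hmem
  open Matrix in
  set φ : FreeAlgebra k (Fin 3) →ₐ[k] Matrix (Fin 4) (Fin 4) k :=
    FreeAlgebra.lift k (repY ν) with hφ
  rw [TwoSidedIdeal.mem_span_iff] at hmem
  have h1 : (1 : Matrix (Fin 4) (Fin 4) k) = 0 := by
    have := hmem (TwoSidedIdeal.ker φ.toRingHom) ?_
    · simpa [TwoSidedIdeal.mem_ker] using this
    intro x hx
    simp only [Set.mem_insert_iff, Set.mem_singleton_iff] at hx
    rw [SetLike.mem_coe, TwoSidedIdeal.mem_ker]
    have hι : ∀ i, φ (FreeAlgebra.ι k i) = repY ν i := fun i => FreeAlgebra.lift_ι_apply _ _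
    rcases hx with rfl | rfl | rfl | rfl | rfl
    · show φ _ = 0
      rw [map_pow, hι]
      simp only [repY, Matrix.cons_val_one, Matrix.head_cons]
      rw [sq]
      simp +decide [add_mul, mul_add, Matrix.single_mul_single_of_ne]
    · show φ _ = 0
      simp only [bc, ygen, map_sub, _root_.map_mul, _root_.map_smul, hι]
      simp only [repY]
      simp +decide [Matrix.single_mul_single_of_ne, Matrix.smul_mul, Matrix.mul_smul]
    · show φ _ = 0
      simp only [bc, ygen, map_sub, _root_.map_mul, _root_.map_smul, hι]
      simp only [repY]
      simp +decide [Matrix.single_mul_single_of_ne, Matrix.single_mul_single_same,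
        Matrix.smul_mul, Matrix.mul_smul, mul_sub, sub_mul, mul_add, add_mul, smul_sub, smul_smul]
    · show φ _ = 0
      simp only [bc, ygen, map_sub, _root_.map_mul, _root_.map_smul, hι]
      simp only [repY]
      simp +decide [Matrix.single_mul_single_of_ne, Matrix.single_mul_single_same,
        Matrix.smul_mul, Matrix.mul_smul, mul_sub, sub_mul, mul_add, add_mul, smul_sub, smul_smul]
    · show φ _ = 0
      simp only [bc, ygen, map_sub, _root_.map_mul, _root_.map_smul, hι, AlgHom.commutes]
      simp only [repY]
      simp +decide [qForm_eval3, hq, Matrix.single_mul_single_of_ne, Matrix.single_mul_single_same,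
        Matrix.smul_mul, Matrix.mul_smul, mul_sub, sub_mul, mul_add, add_mul, smul_sub, smul_smul,
        Algebra.algebraMap_eq_smul_one]
      have c1 : a * (q₀⁻¹ * (a ^ 2)⁻¹) * (q₀ * a * ν) = ν := by field_simp
      have c2 : a * a⁻¹ * ν = ν := by rw [mul_inv_cancel₀ ha, one_mul]
      rw [c1, c2, ← sum_diag_eq_one4 (k := k)]
      simp only [smul_add, Matrix.smul_single, smul_eq_mul, mul_one]
      abel
  exact one_ne_zero h1
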